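/- Let α⁺, λ⁺, α⁻, λ⁻ > 0, r ≥ q ≥ 0, g(x) = x − 1 − ln x, and let Φ be the bilateral Esscher parametrization on I = (λ⁺ − (1 − e^{−(r−q)/α⁺})^{−1}, λ⁺ − 1). Define f : I → ℝ by f(θ) = α⁺ g(λ⁺/(λ⁺−θ)) + α⁻ g(λ⁻/(λ⁻−Φ(θ))). Then f(θ) → +∞ at both endpoints of I, and consequently f attains a global minimum on I. -/

import Mathlib

open Real Set Filter

lemma gfun_nonneg {x : ℝ} (hx : 0 < x) : 0 ≤ x - 1 - Real.log x := by
  have := Real.log_le_sub_one_of_pos hx; linarith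

lemma gfun_atTop : Tendsto (fun x : ℝ => x - 1 - Real.log x) atTop atTop := by
  have h := Real.isLittleO_log_id_atTop.bound (c := (1/2 : ℝ)) (by norm_num)
  have hb : Tendsto (fun x : ℝ => x / 2 - 1) atTop atTop :=
    tendsto_atTop_add_const_right _ _ (tendsto_id.atTop_div_const (by norm_num))
  apply tendsto_atTop_mono' atTop _ hb
  filter_upwards [h, eventually_ge_atTop (0:ℝ)] with x hx hx0
  simp only [Real.norm_eq_abs, id_eq] at hx
  have h2 : Real.log x ≤ (1/2) * x := le_trans (le_abs_self _) (by rwa [abs_of_nonneg hx0] at hx)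
  show x/2 - 1 ≤ x - 1 - Real.log x; linarith

lemma gfun_zero : Tendsto (fun x : ℝ => x - 1 - Real.log x) (nhdsWithin 0 (Ioi 0)) atTop := by
  have h1 : Tendsto (fun x : ℝ => x - 1) (nhdsWithin 0 (Ioi 0)) (nhds (0 - 1)) :=
    ((continuous_id.sub (continuous_const (y := (1:ℝ)))).tendsto 0).mono_left nhdsWithin_le_nhds
  have h2 : Tendsto (fun x : ℝ => -Real.log x) (nhdsWithin 0 (Ioi 0)) atTop :=
    tendsto_neg_atTop_iff.mpr Real.tendsto_log_nhdsGT_zero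
  simpa [sub_eq_add_neg] using h1.add_atTop h2

lemma H_gt_one {ap am c s : ℝ} (hap : 0 < ap) (ham : 0 < am)
    (h : Real.exp (c / ap) < s) : 1 < (s ^ ap * Real.exp (-c)) ^ (1 / am) := by
  have hE : (0:ℝ) < Real.exp (c / ap) := Real.exp_pos _
  have hgt : Real.exp c < s ^ ap := by
    have := Real.rpow_lt_rpow hE.le h hap
    rwa [← Real.exp_mul, div_mul_cancel₀ _ hap.ne'] at this
  have hh1 : 1 < s ^ ap * Real.exp (-c) := by
    have := mul_lt_mul_of_pos_right hgt (Real.exp_pos (-c))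
    rwa [← Real.exp_add, add_neg_cancel, Real.exp_zero] at this
  rw [Real.one_lt_rpow_iff_of_pos (lt_trans one_pos hh1)]
  exact Or.inl ⟨hh1, by positivity⟩

lemma left_aux {ap am lm c : ℝ} (hap : 0 < ap) (ham : 0 < am) (hlm : 0 < lm)
    {F : Filter ℝ} {s : ℝ → ℝ}
    (hs : Tendsto s F (nhds (Real.exp (c / ap))))
    (hs' : ∀ᶠ θ in F, Real.exp (c / ap) < s θ) :
    Tendsto (fun θ => lm * ((s θ ^ ap * Real.exp (-c)) ^ (1 / am) - 1)) F
      (nhdsWithin 0 (Ioi 0)) := by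
  have hE : (0:ℝ) < Real.exp (c / ap) := Real.exp_pos _
  have hh : Tendsto (fun θ => s θ ^ ap * Real.exp (-c)) F (nhds 1) := by
    have h1 : Tendsto (fun θ => s θ ^ ap) F (nhds (Real.exp (c / ap) ^ ap)) :=
      hs.rpow_const (Or.inl hE.ne')
    have h2 : Real.exp (c / ap) ^ ap = Real.exp c := by
      rw [← Real.exp_mul, div_mul_cancel₀ _ hap.ne']
    have := h1.mul_const (Real.exp (-c))
    rw [h2, ← Real.exp_add, add_neg_cancel, Real.exp_zero] at this
    exact this
  have hH : Tendsto (fun θ => (s θ ^ ap * Real.exp (-c)) ^ (1 / am)) F (nhds 1) := by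
    have := hh.rpow_const (p := 1 / am) (Or.inl one_ne_zero)
    simpa using this
  have hmain : Tendsto (fun θ => lm * ((s θ ^ ap * Real.exp (-c)) ^ (1 / am) - 1)) F (nhds 0) := by
    have := (hH.sub_const 1).const_mul lm
    simpa using this
  rw [tendsto_nhdsWithin_iff]
  refine ⟨hmain, ?_⟩
  filter_upwards [hs'] with θ hθ
  have hH1 : 1 < (s θ ^ ap * Real.exp (-c)) ^ (1 / am) := H_gt_one hap ham hθ
  have : 0 < (s θ ^ ap * Real.exp (-c)) ^ (1 / am) - 1 := by linarith
  exact mem_Ioi.mpr (by positivity)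

lemma right_lim {ap am lp lm c : ℝ} (hap : 0 < ap) (ham : 0 < am) (hlm : 0 < lm) :
    Tendsto (fun θ => lm * ((((lp - θ) / (lp - θ - 1)) ^ ap * Real.exp (-c)) ^ (1 / am) - 1))
      (nhdsWithin (lp - 1) (Iio (lp - 1))) atTop := by
  have hden : Tendsto (fun θ : ℝ => lp - θ - 1) (nhdsWithin (lp - 1) (Iio (lp - 1)))
      (nhdsWithin 0 (Ioi 0)) := by
    rw [tendsto_nhdsWithin_iff]
    constructor
    · have : Tendsto (fun θ : ℝ => lp - θ - 1) (nhds (lp - 1)) (nhds (lp - (lp - 1) - 1)) :=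
        ((continuous_const.sub continuous_id).sub continuous_const).tendsto _
      rw [show lp - (lp - 1) - 1 = 0 by ring] at this
      exact this.mono_left nhdsWithin_le_nhds
    · filter_upwards [self_mem_nhdsWithin] with θ (hθ : θ < lp - 1)
      simpa using by linarith
  have hs : Tendsto (fun θ : ℝ => (lp - θ) / (lp - θ - 1))
      (nhdsWithin (lp - 1) (Iio (lp - 1))) atTop := by
    have h1 : Tendsto (fun θ : ℝ => 1 + (lp - θ - 1)⁻¹)
        (nhdsWithin (lp - 1) (Iio (lp - 1))) atTop :=
      tendsto_atTop_add_const_left _ _ (tendsto_inv_nhdsGT_zero.comp hden)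
    apply h1.congr'
    filter_upwards [self_mem_nhdsWithin] with θ (hθ : θ < lp - 1)
    have h2 : lp - θ - 1 ≠ 0 := by linarith
    field_simp
    ring
  have h3 : Tendsto (fun θ : ℝ => (((lp - θ) / (lp - θ - 1)) ^ ap * Real.exp (-c)) ^ (1 / am))
      (nhdsWithin (lp - 1) (Iio (lp - 1))) atTop :=
    (tendsto_rpow_atTop (by positivity : (0:ℝ) < 1 / am)).comp
      (((tendsto_rpow_atTop hap).comp hs).atTop_mul_const (Real.exp_pos _))
  have h4 := (tendsto_atTop_add_const_right _ (-1) h3).const_mul_atTop hlm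
  simpa [sub_eq_add_neg] using h4

lemma assemble {ap am : ℝ} (hap : 0 ≤ ap) (ham : 0 < am) {F : Filter ℝ}
    {x₁ x₂ f : ℝ → ℝ}
    (hx1 : ∀ᶠ θ in F, 0 < x₁ θ)
    (hfe : ∀ θ, f θ = ap * (x₁ θ - 1 - Real.log (x₁ θ)) +
      am * (x₂ θ - 1 - Real.log (x₂ θ)))
    (hx2 : Tendsto ((fun x : ℝ => x - 1 - Real.log x) ∘ x₂) F atTop) :
    Tendsto f F atTop := by
  apply tendsto_atTop_mono' F _ (hx2.const_mul_atTop ham)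
  filter_upwards [hx1] with θ h1
  rw [hfe]
  have h2 := gfun_nonneg h1
  have := mul_nonneg hap h2
  simp only [Function.comp_apply]
  linarith

lemma aux_min (f : ℝ → ℝ) (s : Set ℝ) (hcont : ContinuousOn f s)
    (h : ∃ θ₁ ∈ s, ∃ a b : ℝ, Icc a b ⊆ s ∧ θ₁ ∈ Icc a b ∧
      ∀ θ ∈ s \ Icc a b, f θ₁ < f θ) :
    ∃ θ ∈ s, ∀ θ' ∈ s, f θ ≤ f θ' := by
  obtain ⟨θ₁, hθ₁, a, b, hsub, hmem, hout⟩ := h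
  obtain ⟨θm, hθm, hmin⟩ := isCompact_Icc.exists_isMinOn ⟨θ₁, hmem⟩ (hcont.mono hsub)
  refine ⟨θm, hsub hθm, fun θ' hθ' => ?_⟩
  by_cases hc : θ' ∈ Icc a b
  · exact hmin hc
  · exact le_trans (hmin hmem) (le_of_lt (hout θ' ⟨hθ', hc⟩))

lemma min_Ioo (f : ℝ → ℝ) {a b : ℝ} (hab : a < b)
    (hcont : ContinuousOn f (Ioo a b))
    (hL : Tendsto f (nhdsWithin a (Ioi a)) atTop)
    (hR : Tendsto f (nhdsWithin b (Iio b)) atTop) :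
    ∃ θ ∈ Ioo a b, ∀ θ' ∈ Ioo a b, f θ ≤ f θ' := by
  obtain ⟨θ₁, hθ₁⟩ : (Ioo a b).Nonempty := nonempty_Ioo.mpr hab
  have hLev := hL.eventually (eventually_gt_atTop (f θ₁))
  have hRev := hR.eventually (eventually_gt_atTop (f θ₁))
  rw [eventually_iff, mem_nhdsGT_iff_exists_Ioo_subset] at hLev
  rw [eventually_iff, mem_nhdsLT_iff_exists_Ioo_subset] at hRev
  obtain ⟨u, hu, hsubL⟩ := hLev
  obtain ⟨l, hl, hsubR⟩ := hRev
  refine aux_min f _ hcont ⟨θ₁, hθ₁, min u θ₁, max l θ₁, ?_, ?_, ?_⟩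
  · intro θ hθ
    exact ⟨lt_of_lt_of_le (lt_min hu hθ₁.1) hθ.1,
      lt_of_le_of_lt hθ.2 (max_lt hl hθ₁.2)⟩
  · exact ⟨min_le_right _ _, le_max_right _ _⟩
  · rintro θ ⟨hθI, hθn⟩
    rw [mem_Icc, not_and_or, not_le, not_le] at hθn
    rcases hθn with h' | h'
    · exact hsubL ⟨hθI.1, lt_of_lt_of_le h' (min_le_left _ _)⟩
    · exact hsubR ⟨lt_of_le_of_lt (le_max_left _ _) h', hθI.2⟩

lemma min_Iio (f : ℝ → ℝ) {b : ℝ}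
    (hcont : ContinuousOn f (Iio b))
    (hL : Tendsto f atBot atTop)
    (hR : Tendsto f (nhdsWithin b (Iio b)) atTop) :
    ∃ θ ∈ Iio b, ∀ θ' ∈ Iio b, f θ ≤ f θ' := by
  have hθ₁ : b - 1 ∈ Iio b := by simp
  set θ₁ := b - 1 with hθ₁def
  have hLev := hL.eventually (eventually_gt_atTop (f θ₁))
  have hRev := hR.eventually (eventually_gt_atTop (f θ₁))
  rw [eventually_atBot] at hLev
  rw [eventually_iff, mem_nhdsLT_iff_exists_Ioo_subset] at hRev
  obtain ⟨u, hsubL⟩ := hLev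
  obtain ⟨l, hl, hsubR⟩ := hRev
  refine aux_min f _ hcont ⟨θ₁, hθ₁, min u θ₁, max l θ₁, ?_, ?_, ?_⟩
  · intro θ hθ
    exact lt_of_le_of_lt hθ.2 (max_lt hl hθ₁)
  · exact ⟨min_le_right _ _, le_max_right _ _⟩
  · rintro θ ⟨hθI, hθn⟩
    rw [mem_Icc, not_and_or, not_le, not_le] at hθn
    rcases hθn with h' | h'
    · exact hsubL θ (le_of_lt (lt_of_lt_of_le h' (min_le_left _ _)))
    · exact hsubR ⟨lt_of_le_of_lt (le_max_left _ _) h', hθI⟩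

lemma contAux {ap lp am lm c : ℝ} (hap : 0 < ap) (ham : 0 < am) (hlp : 0 < lp)
    (hlm : 0 < lm) {θ : ℝ} (hθlt : θ < lp - 1)
    (hθs : Real.exp (c / ap) < (lp - θ) / (lp - θ - 1)) :
    ContinuousAt (fun t : ℝ => ap * (lp / (lp - t) - 1 - Real.log (lp / (lp - t))) +
      am * (lm * ((((lp - t) / (lp - t - 1)) ^ ap * Real.exp (-c)) ^ (1 / am) - 1) - 1 -
        Real.log (lm * ((((lp - t) / (lp - t - 1)) ^ ap * Real.exp (-c)) ^ (1 / am) - 1)))) θ := by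
  have hu : (1:ℝ) < lp - θ := by linarith
  have hd2 : (0:ℝ) < lp - θ - 1 := by linarith
  have c_s : ContinuousAt (fun t : ℝ => (lp - t) / (lp - t - 1)) θ :=
    ContinuousAt.div ((continuous_const.sub continuous_id).continuousAt)
      (((continuous_const.sub continuous_id).sub continuous_const).continuousAt) hd2.ne'
  have hsval_pos : 0 < (lp - θ) / (lp - θ - 1) := lt_trans (Real.exp_pos _) hθs
  have c_p : ContinuousAt (fun t : ℝ => ((lp - t) / (lp - t - 1)) ^ ap) θ :=
    c_s.rpow_const (Or.inl hsval_pos.ne')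
  have c_h : ContinuousAt (fun t : ℝ => ((lp - t) / (lp - t - 1)) ^ ap * Real.exp (-c)) θ :=
    c_p.mul continuousAt_const
  have h_pos : 0 < ((lp - θ) / (lp - θ - 1)) ^ ap * Real.exp (-c) := by
    have := Real.rpow_pos_of_pos hsval_pos ap
    positivity
  have c_H : ContinuousAt
      (fun t : ℝ => (((lp - t) / (lp - t - 1)) ^ ap * Real.exp (-c)) ^ (1 / am)) θ :=
    c_h.rpow_const (Or.inl h_pos.ne')
  have c_F2 : ContinuousAt (fun t : ℝ =>
      lm * ((((lp - t) / (lp - t - 1)) ^ ap * Real.exp (-c)) ^ (1 / am) - 1)) θ :=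
    continuousAt_const.mul (c_H.sub continuousAt_const)
  have hHgt : 1 < (((lp - θ) / (lp - θ - 1)) ^ ap * Real.exp (-c)) ^ (1 / am) :=
    H_gt_one hap ham hθs
  have F2_pos : 0 < lm * ((((lp - θ) / (lp - θ - 1)) ^ ap * Real.exp (-c)) ^ (1 / am) - 1) := by
    have h6 : 0 < (((lp - θ) / (lp - θ - 1)) ^ ap * Real.exp (-c)) ^ (1 / am) - 1 := by
      linarith
    positivity
  have c_logF2 := c_F2.log F2_pos.ne'
  have c_x1 : ContinuousAt (fun t : ℝ => lp / (lp - t)) θ :=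
    ContinuousAt.div continuousAt_const ((continuous_const.sub continuous_id).continuousAt)
      (by intro h; rw [h] at hu; linarith : lp - θ ≠ 0)
  have x1_pos : 0 < lp / (lp - θ) := by
    have h7 : (0:ℝ) < lp - θ := by linarith
    positivity
  have c_logx1 := c_x1.log x1_pos.ne'
  exact (continuousAt_const.mul ((c_x1.sub continuousAt_const).sub c_logx1)).add
    (continuousAt_const.mul ((c_F2.sub continuousAt_const).sub c_logF2))

theorem bilateral_esscher_entropy_attains_min
    (ap lp am lm r q : ℝ)
    (hap : 0 < ap) (hlp : 0 < lp) (ham : 0 < am) (hlm : 0 < lm)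
    (hq : 0 ≤ q) (hrq : q ≤ r)
    (g : ℝ → ℝ) (hg : ∀ x, g x = x - 1 - Real.log x)
    (Φ : ℝ → ℝ)
    (hΦ : ∀ θ, Φ θ =
      lm - (((((lp - θ) / (lp - θ - 1)) ^ ap * Real.exp (-(r - q))) ^ (1 / am)) - 1)⁻¹)
    (I : Set ℝ)
    (hI : I = if r = q then Iio (lp - 1)
              else Ioo (lp - (1 - Real.exp (-(r - q) / ap))⁻¹) (lp - 1))
    (f : ℝ → ℝ)
    (hf : ∀ θ, f θ = ap * g (lp / (lp - θ)) + am * g (lm / (lm - Φ θ))) :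
    (if r = q then Tendsto f atBot atTop
     else Tendsto f
       (nhdsWithin (lp - (1 - Real.exp (-(r - q) / ap))⁻¹)
         (Ioi (lp - (1 - Real.exp (-(r - q) / ap))⁻¹))) atTop) ∧
    Tendsto f (nhdsWithin (lp - 1) (Iio (lp - 1))) atTop ∧
    ∃ θ ∈ I, ∀ θ' ∈ I, f θ ≤ f θ' := by
  have key : ∀ X : ℝ, lm / (lm - (lm - X⁻¹)) = lm * X := fun X => by
    rw [sub_sub_cancel, div_eq_mul_inv, inv_inv]
  -- explicit form of f
  have hfe : ∀ θ, f θ = ap * (lp / (lp - θ) - 1 - Real.log (lp / (lp - θ))) +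
      am * (lm * ((((lp - θ) / (lp - θ - 1)) ^ ap * Real.exp (-(r - q))) ^ (1 / am) - 1) - 1 -
        Real.log (lm * ((((lp - θ) / (lp - θ - 1)) ^ ap * Real.exp (-(r - q))) ^ (1 / am) - 1))) := by
    intro θ
    rw [hf, hg, hg, hΦ, key]
  -- right limit (common to both cases)
  have hR : Tendsto f (nhdsWithin (lp - 1) (Iio (lp - 1))) atTop := by
    apply assemble hap.le ham _ hfe (gfun_atTop.comp (right_lim hap ham hlm))
    filter_upwards [self_mem_nhdsWithin] with θ (hθ : θ < lp - 1)
    have h1 : (1:ℝ) < lp - θ := by linarith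
    have : (0:ℝ) < lp - θ := by linarith
    positivity
  rcases eq_or_lt_of_le hrq with hc | hc
  · -- case r = q
    have hrq_eq : r = q := hc.symm
    have hc0 : r - q = 0 := by rw [hrq_eq]; ring
    -- s → 1 at atBot
    have hdenB : Tendsto (fun θ : ℝ => lp - θ - 1) atBot atTop := by
      have h1 : Tendsto (fun θ : ℝ => (lp - 1) + -θ) atBot atTop :=
        tendsto_atTop_add_const_left _ _ tendsto_neg_atBot_atTop
      exact h1.congr (fun θ => by ring)
    have hsB : Tendsto (fun θ : ℝ => (lp - θ) / (lp - θ - 1)) atBot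
        (nhds (Real.exp ((r - q) / ap))) := by
      rw [hc0, zero_div, Real.exp_zero]
      have hinv : Tendsto (fun θ : ℝ => (lp - θ - 1)⁻¹) atBot (nhds 0) :=
        tendsto_inv_atTop_zero.comp hdenB
      have h1 : Tendsto (fun θ : ℝ => 1 + (lp - θ - 1)⁻¹) atBot (nhds 1) := by
        simpa using tendsto_const_nhds.add hinv
      apply h1.congr'
      filter_upwards [eventually_lt_atBot (lp - 1)] with θ (hθ : θ < lp - 1)
      have h2 : lp - θ - 1 ≠ 0 := by linarith
      field_simp
      ring
    have hs'B : ∀ᶠ θ in atBot, Real.exp ((r - q) / ap) < (lp - θ) / (lp - θ - 1) := by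
      rw [hc0, zero_div, Real.exp_zero]
      filter_upwards [eventually_lt_atBot (lp - 1)] with θ (hθ : θ < lp - 1)
      rw [one_lt_div (by linarith : (0:ℝ) < lp - θ - 1)]
      linarith
    have hLB : Tendsto f atBot atTop := by
      apply assemble hap.le ham _ hfe (gfun_zero.comp (left_aux hap ham hlm hsB hs'B))
      filter_upwards [eventually_lt_atBot (lp - 1)] with θ (hθ : θ < lp - 1)
      have : (0:ℝ) < lp - θ := by linarith
      positivity
    have hIeq : I = Iio (lp - 1) := by rw [hI, if_pos hrq_eq]
    have hcont : ContinuousOn f I := by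
      apply ContinuousOn.congr (f := fun θ => ap * (lp / (lp - θ) - 1 -
        Real.log (lp / (lp - θ))) +
        am * (lm * ((((lp - θ) / (lp - θ - 1)) ^ ap * Real.exp (-(r - q))) ^ (1 / am) - 1) - 1 -
          Real.log (lm * ((((lp - θ) / (lp - θ - 1)) ^ ap * Real.exp (-(r - q))) ^ (1 / am) - 1))))
      · intro θ hθ
        rw [hIeq, mem_Iio] at hθ
        apply (contAux hap ham hlp hlm hθ ?_).continuousWithinAt
        rw [hc0, zero_div, Real.exp_zero, one_lt_div (by linarith : (0:ℝ) < lp - θ - 1)]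
        linarith
      · intro θ _; exact hfe θ
    refine ⟨?_, hR, ?_⟩
    · rw [if_pos hrq_eq]; exact hLB
    · rw [hIeq] at hcont ⊢
      exact min_Iio f hcont hLB hR
  · -- case q < r
    have hne : ¬ r = q := fun h => absurd hc (by rw [h]; exact lt_irrefl q)
    set E := Real.exp (-(r - q) / ap) with hEdef
    have hE0 : 0 < E := Real.exp_pos _
    have hE1 : E < 1 := by
      rw [hEdef, Real.exp_lt_one_iff]
      exact div_neg_of_neg_of_pos (by linarith) hap
    have h1E : 0 < 1 - E := by linarith
    have hEinv : Real.exp ((r - q) / ap) = E⁻¹ := by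
      rw [hEdef, show -(r - q) / ap = -((r - q) / ap) by ring, Real.exp_neg, inv_inv]
    have hinv1 : 1 < (1 - E)⁻¹ := one_lt_inv_iff₀.mpr ⟨h1E, by linarith⟩
    set θ₀ := lp - (1 - E)⁻¹ with hθ₀def
    have hθ₀b : θ₀ < lp - 1 := by rw [hθ₀def]; linarith
    -- s θ on (θ₀, lp-1) is > exp((r-q)/ap)
    have hsgt : ∀ θ : ℝ, θ₀ < θ → θ < lp - 1 →
        Real.exp ((r - q) / ap) < (lp - θ) / (lp - θ - 1) := by
      intro θ hθ1 hθ2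
      rw [hEinv]
      have hu1 : (1:ℝ) < lp - θ := by linarith
      have hu2 : lp - θ < (1 - E)⁻¹ := by rw [hθ₀def] at hθ1; linarith
      have h5 : (lp - θ) * (1 - E) < 1 := by
        rw [inv_eq_one_div] at hu2
        exact (lt_div_iff₀ h1E).mp hu2
      rw [lt_div_iff₀ (by linarith : (0:ℝ) < lp - θ - 1), inv_mul_lt_iff₀ hE0]
      nlinarith
    -- s continuous at θ₀ with value E⁻¹
    have hsC : Tendsto (fun θ : ℝ => (lp - θ) / (lp - θ - 1)) (nhdsWithin θ₀ (Ioi θ₀))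
        (nhds (Real.exp ((r - q) / ap))) := by
      have hd : lp - θ₀ - 1 ≠ 0 := by rw [hθ₀def]; intro h; nlinarith [hinv1]
      have hca2 : ContinuousAt (fun θ : ℝ => (lp - θ) / (lp - θ - 1)) θ₀ :=
        ContinuousAt.div ((continuous_const.sub continuous_id).continuousAt)
          (((continuous_const.sub continuous_id).sub continuous_const).continuousAt) hd
      have hval : (lp - θ₀) / (lp - θ₀ - 1) = Real.exp ((r - q) / ap) := by
        rw [hEinv, hθ₀def, show lp - (lp - (1 - E)⁻¹) = (1 - E)⁻¹ by ring]
        have h2 : (1 - E)⁻¹ - 1 ≠ 0 := by linarith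
        field_simp
        rw [sub_sub_cancel, div_self hE0.ne']
      have := hca2.tendsto
      rw [hval] at this
      exact this.mono_left nhdsWithin_le_nhds
    have hs'C : ∀ᶠ θ in nhdsWithin θ₀ (Ioi θ₀),
        Real.exp ((r - q) / ap) < (lp - θ) / (lp - θ - 1) := by
      filter_upwards [self_mem_nhdsWithin,
        mem_nhdsWithin_of_mem_nhds (Iio_mem_nhds hθ₀b)] with θ h1 h2
      exact hsgt θ h1 h2
    have hL : Tendsto f (nhdsWithin θ₀ (Ioi θ₀)) atTop := by
      apply assemble hap.le ham _ hfe (gfun_zero.comp (left_aux hap ham hlm hsC hs'C))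
      filter_upwards [mem_nhdsWithin_of_mem_nhds (Iio_mem_nhds hθ₀b)] with θ (hθ : θ < lp - 1)
      have : (0:ℝ) < lp - θ := by linarith
      positivity
    have hIeq : I = Ioo θ₀ (lp - 1) := by rw [hI, if_neg hne]
    have hcont : ContinuousOn f I := by
      apply ContinuousOn.congr (f := fun θ => ap * (lp / (lp - θ) - 1 -
        Real.log (lp / (lp - θ))) +
        am * (lm * ((((lp - θ) / (lp - θ - 1)) ^ ap * Real.exp (-(r - q))) ^ (1 / am) - 1) - 1 -
          Real.log (lm * ((((lp - θ) / (lp - θ - 1)) ^ ap * Real.exp (-(r - q))) ^ (1 / am) - 1))))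
      · intro θ hθ
        rw [hIeq, mem_Ioo] at hθ
        exact (contAux hap ham hlp hlm hθ.2 (hsgt θ hθ.1 hθ.2)).continuousWithinAt
      · intro θ _; exact hfe θ
    refine ⟨?_, hR, ?_⟩
    · rw [if_neg hne]; exact hL
    · rw [hIeq] at hcont ⊢
      exact min_Ioo f hθ₀b hcont hL hR
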